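/- Elementary cellular automaton rule 28 is not Von Neumann regular: writing f for ECA 28, f(0^ℤ) = f(1^ℤ) = 0^ℤ, the point x = ...000010000... (a single 1) lies in f({0,1}^ℤ) but has no f-preimage asymptotic at both ends to 0^ℤ, and the point x' = ...000110000... (the word 11 surrounded by 0s) lies in f({0,1}^ℤ) but has no f-preimage asymptotic at both ends to 1^ℤ; consequently no shift-commuting continuous g satisfies f ∘ g ∘ f = f. -/

import Mathlib

/-- ECA rule 28 (`f(x)_i = 1` iff `x_{i-1} x_i x_{i+1} ∈ {010, 011, 100}`) is not
Von Neumann regular: `f(0^ℤ) = f(1^ℤ) = 0^ℤ`; the point `x` with a single `1`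
lies in the image of `f` but has no `f`-preimage asymptotic at both ends to `0^ℤ`;
the point `x'` with the word `11` surrounded by `0`s lies in the image of `f` but
has no `f`-preimage asymptotic at both ends to `1^ℤ`; and consequently no
shift-commuting continuous `g` satisfies `f ∘ g ∘ f = f`. -/
theorem stmt_13
    (f : (ℤ → Bool) → (ℤ → Bool))
    (hf : ∀ x i, f x i =
      (((!(x (i - 1))) && x i) || (x (i - 1) && !(x i) && !(x (i + 1)))))
    (x x' : ℤ → Bool)
    (hx : ∀ i : ℤ, x i = decide (i = 0))
    (hx' : ∀ i : ℤ, x' i = decide (i = 0 ∨ i = 1)) :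
    f (fun _ => false) = (fun _ => false) ∧
    f (fun _ => true) = (fun _ => false) ∧
    x ∈ Set.range f ∧
    (¬ ∃ y : ℤ → Bool, f y = x ∧ ∃ N : ℤ, ∀ i : ℤ, N ≤ |i| → y i = false) ∧
    x' ∈ Set.range f ∧
    (¬ ∃ y : ℤ → Bool, f y = x' ∧ ∃ N : ℤ, ∀ i : ℤ, N ≤ |i| → y i = true) ∧
    ¬ ∃ g : (ℤ → Bool) → (ℤ → Bool),
        Continuous g ∧
        (∀ z : ℤ → Bool, g (fun i => z (i + 1)) = fun i => g z (i + 1)) ∧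
        ∀ z, f (g (f z)) = f z := by
  have h1 : f (fun _ => false) = (fun _ => false) := by
    funext i; rw [hf]; rfl
  have h2 : f (fun _ => true) = (fun _ => false) := by
    funext i; rw [hf]; rfl
  -- preimage of x
  have h3fx : f (fun i => decide ((0:ℤ) ≤ i)) = x := by
    funext i
    rw [hf, hx]
    rcases lt_trichotomy i 0 with h | h | h
    · have a1 : ¬ (0:ℤ) ≤ i - 1 := by omega
      have a2 : ¬ (0:ℤ) ≤ i := by omega
      have a3 : i ≠ 0 := by omega
      simp [a1, a2, a3]
      intro; omega
    · subst h; norm_num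
    · have a1 : (0:ℤ) ≤ i - 1 := by omega
      have a2 : (0:ℤ) ≤ i := by omega
      have a3 : i ≠ 0 := by omega
      simp [a1, a2, a3]
      omega
  have h4 : ¬ ∃ y : ℤ → Bool, f y = x ∧ ∃ N : ℤ, ∀ i : ℤ, N ≤ |i| → y i = false := by
    rintro ⟨y, hy, N, hN⟩
    have hfy : ∀ i, f y i = decide (i = 0) := by
      intro i; rw [hy, hx]
    have hne : ∃ i, y i = true := by
      by_contra h
      push_neg at h
      have hall : ∀ i, y i = false := by
        intro i; cases hb : y i
        · rfl
        · exact absurd hb (h i)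
      have h0 := hfy 0
      rw [hf] at h0
      simp [hall] at h0
    -- greatest index with y = true
    obtain ⟨m, hm, hmax⟩ := Int.exists_greatest_of_bdd (P := fun i => y i = true)
      ⟨|N|, fun z hz => by
        by_contra hc
        push_neg at hc
        have : N ≤ |z| := by
          have := abs_nonneg N
          have := le_abs_self N
          rcases abs_cases z with ⟨e, _⟩ | ⟨e, _⟩ <;> omega
        have hz' : y z = true := hz
        rw [hN z this] at hz'; simp at hz'⟩ hne
    obtain ⟨l, hl, hmin⟩ := Int.exists_least_of_bdd (P := fun i => y i = true)
      ⟨-|N|, fun z hz => by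
        by_contra hc
        push_neg at hc
        have : N ≤ |z| := by
          have := abs_nonneg N
          have := le_abs_self N
          rcases abs_cases z with ⟨e, _⟩ | ⟨e, _⟩ <;> omega
        have hz' : y z = true := hz
        rw [hN z this] at hz'; simp at hz'⟩ hne
    have hgt : ∀ i, m < i → y i = false := by
      intro i hi; cases hb : y i
      · rfl
      · exact absurd (hmax i hb) (by omega)
    have hlt : ∀ i, i < l → y i = false := by
      intro i hi; cases hb : y i
      · rfl
      · exact absurd (hmin i hb) (by omega)
    have hl0 : l = 0 := by
      have := hfy l
      rw [hf, hlt (l - 1) (by omega), hl] at this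
      simpa using this
    have hm0 : m + 1 = 0 := by
      have := hfy (m + 1)
      rw [hf] at this
      simp only [add_sub_cancel_right] at this
      rw [hm, hgt (m + 1) (by omega), hgt (m + 1 + 1) (by omega)] at this
      simpa using this
    have := hmin m hm
    omega
  have h5fx : f x = x' := by
    funext i
    rw [hf, hx, hx, hx, hx']
    rcases lt_trichotomy i 0 with h | h | h
    · have a1 : i - 1 ≠ 0 := by omega
      have a3 : i ≠ 0 := by omega
      have a4 : ¬ (i = 0 ∨ i = 1) := by omega
      have a5 : i ≠ 1 := by omega
      simp [a1, a3, a4, a5]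
    · subst h; norm_num
    · rcases eq_or_lt_of_le (by omega : (1:ℤ) ≤ i) with h1' | h1'
      · rw [← h1']; norm_num
      · have a1 : i - 1 ≠ 0 := by omega
        have a3 : i ≠ 0 := by omega
        have a4 : ¬ (i = 0 ∨ i = 1) := by omega
        have a5 : i ≠ 1 := by omega
        simp [a1, a3, a4, a5]
  have h6 : ¬ ∃ y : ℤ → Bool, f y = x' ∧ ∃ N : ℤ, ∀ i : ℤ, N ≤ |i| → y i = true := by
    rintro ⟨y, hy, N, hN⟩
    have hfy : ∀ i, f y i = decide (i = 0 ∨ i = 1) := by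
      intro i; rw [hy, hx']
    have hne : ∃ i, y i = false := by
      by_contra h
      push_neg at h
      have hall : ∀ i, y i = true := by
        intro i; cases hb : y i
        · exact absurd hb (h i)
        · rfl
      have h0 := hfy 0
      rw [hf] at h0
      simp [hall] at h0
    obtain ⟨m, hm, hmax⟩ := Int.exists_greatest_of_bdd (P := fun i => y i = false)
      ⟨|N|, fun z hz => by
        by_contra hc
        push_neg at hc
        have : N ≤ |z| := by
          have := abs_nonneg N
          have := le_abs_self N
          rcases abs_cases z with ⟨e, _⟩ | ⟨e, _⟩ <;> omega
        have hz' : y z = false := hz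
        rw [hN z this] at hz'; simp at hz'⟩ hne
    have hgt : ∀ i, m < i → y i = true := by
      intro i hi; cases hb : y i
      · exact absurd (hmax i hb) (by omega)
      · rfl
    have hcase : m + 1 = 0 ∨ m + 1 = 1 := by
      have := hfy (m + 1)
      rw [hf] at this
      simp only [add_sub_cancel_right] at this
      rw [hm, hgt (m + 1) (by omega)] at this
      simpa using this
    rcases hcase with hc | hc
    · -- m = -1 : f y 1 should be true but y 0 = y 1 = y 2 = true
      have e0 : y 0 = true := hgt 0 (by omega)
      have e1 : y 1 = true := hgt 1 (by omega)
      have := hfy 1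
      rw [hf] at this
      have d1 : (1:ℤ) - 1 = 0 := by norm_num
      rw [d1, e0, e1] at this
      simp at this
    · -- m = 0 : f y 0 should be true but y 0 = false, y 1 = true
      have hy0 : y 0 = false := by rw [← (by omega : m = 0)]; exact hm
      have e1 : y 1 = true := hgt 1 (by omega)
      have := hfy 0
      rw [hf] at this
      have d2 : (0:ℤ) + 1 = 1 := by norm_num
      rw [d2, hy0, e1] at this
      simp at this
  refine ⟨h1, h2, ⟨_, h3fx⟩, h4, ⟨x, h5fx⟩, h6, ?_⟩
  rintro ⟨g, hgc, hgs, hgr⟩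
  -- shift in the other direction
  have hgs' : ∀ z : ℤ → Bool, g (fun i => z (i - 1)) = fun i => g z (i - 1) := by
    intro z
    have h := hgs (fun i => z (i - 1))
    have e : (fun i => (fun j => z (j - 1)) (i + 1)) = z := by
      funext i; simp
    rw [e] at h
    funext i
    have h2' := congrFun h (i - 1)
    simp only [sub_add_cancel] at h2'
    exact h2'.symm
  have shiftR : ∀ (z : ℤ → Bool) (n : ℕ),
      g (fun i => z (i + n)) = fun i => g z (i + n) := by
    intro z n
    induction n with
    | zero => simp
    | succ k ih =>
      have e : (fun i : ℤ => z (i + (k + 1 : ℕ)))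
          = (fun i : ℤ => (fun j : ℤ => z (j + k)) (i + 1)) := by
        funext i; congr 1; push_cast; ring
      rw [e, hgs (fun j : ℤ => z (j + (k:ℤ))), ih]
      funext i
      show g z (i + 1 + (k:ℤ)) = g z (i + ((k:ℕ) + 1 : ℕ))
      congr 1; push_cast; ring
  have shiftL : ∀ (z : ℤ → Bool) (n : ℕ),
      g (fun i => z (i - n)) = fun i => g z (i - n) := by
    intro z n
    induction n with
    | zero => simp
    | succ k ih =>
      have e : (fun i : ℤ => z (i - (k + 1 : ℕ)))
          = (fun i : ℤ => (fun j : ℤ => z (j - k)) (i - 1)) := by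
        funext i; congr 1; push_cast; ring
      rw [e, hgs' (fun j : ℤ => z (j - (k:ℤ))), ih]
      funext i
      show g z (i - 1 - (k:ℤ)) = g z (i - ((k:ℕ) + 1 : ℕ))
      congr 1; push_cast; ring
  set c0 : ℤ → Bool := fun _ => false with hc0
  set b : Bool := g c0 0 with hb
  -- main convergence claim
  have main : ∀ p : ℤ → Bool, (∃ M : ℤ, ∀ i : ℤ, M ≤ |i| → p i = false) →
      ∃ N : ℤ, ∀ i : ℤ, N ≤ |i| → g p i = b := by
    rintro p ⟨M, hM⟩
    have tendR : Filter.Tendsto (fun n : ℕ => (fun i => p (i + n)))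
        Filter.atTop (nhds c0) := by
      rw [tendsto_pi_nhds]
      intro i
      have hev : ∀ᶠ n : ℕ in Filter.atTop, p (i + n) = false := by
        filter_upwards [Filter.eventually_ge_atTop (M + |i|).toNat] with n hn
        apply hM
        have h3 : M + |i| ≤ (n : ℤ) :=
          le_trans (Int.self_le_toNat _) (by exact_mod_cast hn)
        have h4 : -i ≤ |i| := neg_le_abs i
        have h5 : M ≤ i + (n : ℤ) := by linarith
        exact le_trans h5 (le_abs_self _)
      exact tendsto_const_nhds.congr' (by filter_upwards [hev] with n hn; exact hn.symm)
    have tendL : Filter.Tendsto (fun n : ℕ => (fun i => p (i - n)))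
        Filter.atTop (nhds c0) := by
      rw [tendsto_pi_nhds]
      intro i
      have hev : ∀ᶠ n : ℕ in Filter.atTop, p (i - n) = false := by
        filter_upwards [Filter.eventually_ge_atTop (M + |i|).toNat] with n hn
        apply hM
        have h3 : M + |i| ≤ (n : ℤ) :=
          le_trans (Int.self_le_toNat _) (by exact_mod_cast hn)
        have h4 : i ≤ |i| := le_abs_self i
        have h5 : M ≤ -(i - (n : ℤ)) := by linarith
        exact le_trans h5 (neg_le_abs _)
      exact tendsto_const_nhds.congr' (by filter_upwards [hev] with n hn; exact hn.symm)
    have gR := (hgc.tendsto c0).comp tendR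
    have gL := (hgc.tendsto c0).comp tendL
    have cR : Filter.Tendsto (fun n : ℕ => g (fun i => p (i + n)) 0)
        Filter.atTop (nhds (g c0 0)) := tendsto_pi_nhds.mp gR 0
    have cL : Filter.Tendsto (fun n : ℕ => g (fun i => p (i - n)) 0)
        Filter.atTop (nhds (g c0 0)) := tendsto_pi_nhds.mp gL 0
    have evR : ∀ᶠ n : ℕ in Filter.atTop, g (fun i => p (i + n)) 0 = b := by
      have := cR ((isOpen_discrete ({g c0 0} : Set Bool)).mem_nhds rfl)
      filter_upwards [this] with n hn
      simpa [hb] using hn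
    have evL : ∀ᶠ n : ℕ in Filter.atTop, g (fun i => p (i - n)) 0 = b := by
      have := cL ((isOpen_discrete ({g c0 0} : Set Bool)).mem_nhds rfl)
      filter_upwards [this] with n hn
      simpa [hb] using hn
    obtain ⟨N1, hN1⟩ := Filter.eventually_atTop.mp evR
    obtain ⟨N2, hN2⟩ := Filter.eventually_atTop.mp evL
    have hpos : ∀ n : ℕ, N1 ≤ n → g p (n : ℤ) = b := by
      intro n hn
      have := hN1 n hn
      rw [shiftR p n] at this
      simpa using this
    have hneg : ∀ n : ℕ, N2 ≤ n → g p (-(n : ℤ)) = b := by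
      intro n hn
      have := hN2 n hn
      rw [shiftL p n] at this
      simpa using this
    refine ⟨(max N1 N2 : ℕ), fun i hi => ?_⟩
    rcases le_or_gt 0 i with h | h
    · have habs : |i| = i := abs_of_nonneg h
      have hn : N1 ≤ i.toNat := by
        have : ((max N1 N2 : ℕ) : ℤ) ≤ i := by rw [← habs]; exact hi
        omega
      have := hpos i.toNat hn
      rwa [Int.toNat_of_nonneg h] at this
    · have habs : |i| = -i := abs_of_neg h
      have hn : N2 ≤ (-i).toNat := by
        have : ((max N1 N2 : ℕ) : ℤ) ≤ -i := by rw [← habs]; exact hi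
        omega
      have := hneg (-i).toNat hn
      rwa [Int.toNat_of_nonneg (by omega), neg_neg] at this
  -- x and x' are asymptotic to 0 at both ends
  have hx0 : ∃ M : ℤ, ∀ i : ℤ, M ≤ |i| → x i = false := by
    refine ⟨1, fun i hi => ?_⟩
    rw [hx]
    have : i ≠ 0 := by rcases abs_cases i with ⟨e, _⟩ | ⟨e, _⟩ <;> omega
    simp [this]
  have hx'0 : ∃ M : ℤ, ∀ i : ℤ, M ≤ |i| → x' i = false := by
    refine ⟨2, fun i hi => ?_⟩
    rw [hx']
    have : ¬ (i = 0 ∨ i = 1) := by rcases abs_cases i with ⟨e, _⟩ | ⟨e, _⟩ <;> omega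
    simp [this]
  cases hbv : b
  · -- g c0 0 = false : contradict h4 with y = g x
    apply h4
    refine ⟨g x, ?_, ?_⟩
    · have := hgr (fun i => decide ((0:ℤ) ≤ i))
      rwa [h3fx] at this
    · obtain ⟨N, hN⟩ := main x hx0
      exact ⟨N, fun i hi => by rw [hN i hi, hbv]⟩
  · -- g c0 0 = true : contradict h6 with y = g x'
    apply h6
    refine ⟨g x', ?_, ?_⟩
    · have := hgr x
      rwa [h5fx] at this
    · obtain ⟨N, hN⟩ := main x' hx'0
      exact ⟨N, fun i hi => by rw [hN i hi, hbv]⟩
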